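/- Let f : ℝ → ℝ be continuously differentiable and let (θ, ψ) : [0, ∞) → ℝ² be a differentiable curve satisfying θ′(t) = −f′(−θ(t)ψ(t))ψ(t) and ψ′(t) = f′(θ(t)ψ(t))θ(t). Then for all t, d/dt (θ(t)² + ψ(t)²) = 2[f′(θ(t)ψ(t)) − f′(−θ(t)ψ(t))]·θ(t)ψ(t). Moreover, if f is concave, this expression is nonpositive for all t, so t ↦ θ(t)² + ψ(t)² is nonincreasing. -/

import Mathlib

/-- If `f` is concave on `ℝ` and differentiable, its derivative is antitone. -/
lemma concave_deriv_antitone {f : ℝ → ℝ} (hf : Differentiable ℝ f)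
    (hc : ConcaveOn ℝ Set.univ f) : Antitone (deriv f) := by
  intro x y hxy
  rcases eq_or_lt_of_le hxy with rfl | hxy
  · exact le_rfl
  have hneg : ConvexOn ℝ Set.univ (-f) := hc.neg
  have h1 : -deriv f x ≤ slope (-f) x y :=
    hneg.le_slope_of_hasDerivAt (Set.mem_univ x) (Set.mem_univ y) hxy
      (by simpa [Pi.neg_def] using (hf x).hasDerivAt.neg)
  have h2 : slope (-f) x y ≤ -deriv f y :=
    hneg.slope_le_of_hasDerivAt (Set.mem_univ x) (Set.mem_univ y) hxy
      (by simpa [Pi.neg_def] using (hf y).hasDerivAt.neg)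
  linarith [h1.trans h2]

/-- For every integral curve of the nonsaturating Dirac-GAN gradient vector field,
`d/dt (θ(t)² + ψ(t)²) = 2[f′(θψ) − f′(−θψ)]·θψ`; if `f` is concave this is nonpositive,
so `t ↦ θ(t)² + ψ(t)²` is nonincreasing. -/
theorem nonsaturating_dirac_gan_norm_nonincreasing
    (f : ℝ → ℝ) (hf : ContDiff ℝ 1 f) (θ ψ : ℝ → ℝ)
    (hθ : ∀ t ∈ Set.Ici (0 : ℝ),
      HasDerivWithinAt θ (-(deriv f (-(θ t * ψ t))) * ψ t) (Set.Ici (0 : ℝ)) t)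
    (hψ : ∀ t ∈ Set.Ici (0 : ℝ),
      HasDerivWithinAt ψ (deriv f (θ t * ψ t) * θ t) (Set.Ici (0 : ℝ)) t) :
    (∀ t ∈ Set.Ici (0 : ℝ),
      HasDerivWithinAt (fun s => θ s ^ 2 + ψ s ^ 2)
        (2 * (deriv f (θ t * ψ t) - deriv f (-(θ t * ψ t))) * (θ t * ψ t))
        (Set.Ici (0 : ℝ)) t) ∧
    (ConcaveOn ℝ Set.univ f →
      (∀ t ∈ Set.Ici (0 : ℝ),
        2 * (deriv f (θ t * ψ t) - deriv f (-(θ t * ψ t))) * (θ t * ψ t) ≤ 0) ∧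
      AntitoneOn (fun s => θ s ^ 2 + ψ s ^ 2) (Set.Ici (0 : ℝ))) := by
  have hdiff : Differentiable ℝ f := hf.differentiable one_ne_zero
  have key : ∀ t ∈ Set.Ici (0 : ℝ),
      HasDerivWithinAt (fun s => θ s ^ 2 + ψ s ^ 2)
        (2 * (deriv f (θ t * ψ t) - deriv f (-(θ t * ψ t))) * (θ t * ψ t))
        (Set.Ici (0 : ℝ)) t := by
    intro t ht
    have h1 : HasDerivWithinAt (fun s => θ s ^ 2 + ψ s ^ 2) _ (Set.Ici (0 : ℝ)) t :=
      ((hθ t ht).fun_pow 2).fun_add ((hψ t ht).fun_pow 2)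
    convert h1 using 1
    ring
  refine ⟨key, fun hc => ?_⟩
  have hanti := concave_deriv_antitone hdiff hc
  have hnonpos : ∀ t ∈ Set.Ici (0 : ℝ),
      2 * (deriv f (θ t * ψ t) - deriv f (-(θ t * ψ t))) * (θ t * ψ t) ≤ 0 := by
    intro t _
    set u := θ t * ψ t with hu
    rcases le_total 0 u with h | h
    · have : deriv f u ≤ deriv f (-u) := hanti (by linarith)
      nlinarith
    · have : deriv f (-u) ≤ deriv f u := hanti (by linarith)
      nlinarith
  refine ⟨hnonpos, ?_⟩
  have hcont : ContinuousOn (fun s => θ s ^ 2 + ψ s ^ 2) (Set.Ici (0 : ℝ)) :=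
    fun t ht => ((key t ht).continuousWithinAt)
  refine antitoneOn_of_deriv_nonpos (convex_Ici 0) hcont ?_ ?_
  · intro t ht
    rw [interior_Ici] at ht
    exact ((key t (le_of_lt ht : (0:ℝ) ≤ t)).hasDerivAt (Ici_mem_nhds ht)).differentiableAt.differentiableWithinAt
  · intro t ht
    rw [interior_Ici] at ht
    rw [((key t (le_of_lt ht : (0:ℝ) ≤ t)).hasDerivAt (Ici_mem_nhds ht)).deriv]
    exact hnonpos t (le_of_lt ht : (0:ℝ) ≤ t)
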